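/- Any orientable hypersurface M of S²×S² with C = ⟨PN,N⟩ ≡ 1 satisfies A∘P = A (equivalently PᵀA = A), the 2-dimensional distribution D orthogonal to J₁N satisfies A|_D = 0 and P|_D = -Id, and D is a totally geodesic foliation. Consequently M is locally the Riemannian product of a curve in S² and an open subset of S². -/

import Mathlib

open Matrix

/-- Points of the (local) hypersurface are parametrized by a chart with values in `ℝ³`. -/
abbrev V3 := Fin 3 → ℝ

/-- Directional derivative of an `ℝ³`-valued map. -/
noncomputable def Dv (f : V3 → V3) (x v : V3) : V3 := fderiv ℝ f x v

/-- Derivative of a dot product of two `V3`-valued maps. -/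
lemma fderiv_dot {f g : V3 → V3} {x : V3} (hf : DifferentiableAt ℝ f x)
    (hg : DifferentiableAt ℝ g x) (v : V3) :
    fderiv ℝ (fun y => f y ⬝ᵥ g y) x v = fderiv ℝ f x v ⬝ᵥ g x + f x ⬝ᵥ fderiv ℝ g x v := by
  have hfi : ∀ i : Fin 3, HasFDerivAt (fun y => f y i)
      ((ContinuousLinearMap.proj i).comp (fderiv ℝ f x)) x :=
    fun i => by
      simpa [Function.comp_def] using
        (ContinuousLinearMap.proj (R := ℝ) (φ := fun _ : Fin 3 => ℝ) i).hasFDerivAt.comp x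
          hf.hasFDerivAt
  have hgi : ∀ i : Fin 3, HasFDerivAt (fun y => g y i)
      ((ContinuousLinearMap.proj i).comp (fderiv ℝ g x)) x :=
    fun i => by
      simpa [Function.comp_def] using
        (ContinuousLinearMap.proj (R := ℝ) (φ := fun _ : Fin 3 => ℝ) i).hasFDerivAt.comp x
          hg.hasFDerivAt
  have h : HasFDerivAt (fun y => f y ⬝ᵥ g y)
      (∑ i : Fin 3, (f x i • (ContinuousLinearMap.proj i).comp (fderiv ℝ g x)
        + g x i • (ContinuousLinearMap.proj i).comp (fderiv ℝ f x))) x := by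
    simp only [dotProduct]
    exact HasFDerivAt.fun_sum fun i _ => (hfi i).mul (hgi i)
  rw [h.fderiv]
  simp only [ContinuousLinearMap.sum_apply, ContinuousLinearMap.add_apply,
    ContinuousLinearMap.smul_apply, ContinuousLinearMap.comp_apply,
    ContinuousLinearMap.proj_apply, smul_eq_mul, dotProduct, Finset.sum_add_distrib]
  rw [add_comm]
  congr 1 <;> exact Finset.sum_congr rfl fun i _ => by ring

lemma bac_cab (u v w : V3) : u ⨯₃ (v ⨯₃ w) = (u ⬝ᵥ w) • v - (u ⬝ᵥ v) • w := by
  simp only [cross_apply, dotProduct, Fin.sum_univ_three]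
  funext i
  fin_cases i <;> simp <;> ring

lemma orth3 {a b w : V3} (ha : a ⬝ᵥ a = 1) (hb : b ⬝ᵥ b = 1) (hab : a ⬝ᵥ b = 0)
    (h1 : w ⬝ᵥ a = 0) (h2 : w ⬝ᵥ b = 0) (h3 : w ⬝ᵥ (a ⨯₃ b) = 0) : w = 0 := by
  have hw : w ⨯₃ (a ⨯₃ b) = 0 := by
    rw [bac_cab, h1, h2]; simp
  have hL := cross_dot_cross w (a ⨯₃ b) w (a ⨯₃ b)
  have hcc : (a ⨯₃ b) ⬝ᵥ (a ⨯₃ b) = 1 := by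
    rw [cross_dot_cross, ha, hb, hab, dotProduct_comm b a, hab]; ring
  rw [hw] at hL
  simp only [zero_dotProduct] at hL
  rw [hcc, h3, dotProduct_comm (a ⨯₃ b) w, h3] at hL
  have : w ⬝ᵥ w = 0 := by linarith
  exact dotProduct_self_eq_zero.mp this

/-- If an orientable hypersurface `Φ = (φ,ψ) : M → S²×S²` has
`C = ⟨PN,N⟩ ≡ 1`, then `P∘A = A` (i.e. `P dΦ(Av) = dΦ(Av)`); the 2-dimensional
distribution `D` orthogonal to `J₁N` satisfies `A|_D = 0` and `P|_D = -Id` (hence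
the first-factor component of `dΦ` vanishes on `D`, so `M` is locally the Riemannian
product of an integral curve of `J₁N` in `S²` and an open subset of `S²`); and `D`
is a totally geodesic foliation: `⟨∇_V W, J₁N⟩ = 0` for vector fields `V, W` in `D`.
Here `J₁N = (φ × N₁, ψ × N₂)`. -/
theorem stmt_13
    (φ ψ N1 N2 : V3 → V3) (A : V3 → V3 →ₗ[ℝ] V3)
    (hφ : ContDiff ℝ 2 φ) (hψ : ContDiff ℝ 2 ψ)
    (hN1 : ContDiff ℝ 2 N1) (hN2 : ContDiff ℝ 2 N2)
    (hsph1 : ∀ x, φ x ⬝ᵥ φ x = 1) (hsph2 : ∀ x, ψ x ⬝ᵥ ψ x = 1)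
    (hNunit : ∀ x, N1 x ⬝ᵥ N1 x + N2 x ⬝ᵥ N2 x = 1)
    (hNtan1 : ∀ x, N1 x ⬝ᵥ φ x = 0) (hNtan2 : ∀ x, N2 x ⬝ᵥ ψ x = 0)
    (hNnorm : ∀ x v, N1 x ⬝ᵥ Dv φ x v + N2 x ⬝ᵥ Dv ψ x v = 0)
    (hW1 : ∀ x v, fderiv ℝ N1 x v + (N1 x ⬝ᵥ Dv φ x v) • φ x = -(Dv φ x (A x v)))
    (hW2 : ∀ x v, fderiv ℝ N2 x v + (N2 x ⬝ᵥ Dv ψ x v) • ψ x = -(Dv ψ x (A x v)))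
    -- C ≡ 1:
    (hC1 : ∀ x, N1 x ⬝ᵥ N1 x - N2 x ⬝ᵥ N2 x = 1) :
    -- (a) P ∘ A = A:
    (∀ x v, ((Dv φ x (A x v), -(Dv ψ x (A x v))) : V3 × V3) =
      (Dv φ x (A x v), Dv ψ x (A x v))) ∧
    -- (b) on D = (J₁N)^⊥: A|_D = 0, P|_D = -Id, and dφ|_D = 0:
    (∀ x v,
      Dv φ x v ⬝ᵥ crossProduct (φ x) (N1 x) + Dv ψ x v ⬝ᵥ crossProduct (ψ x) (N2 x) = 0 →
      (Dv φ x (A x v) = 0 ∧ Dv ψ x (A x v) = 0) ∧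
      ((Dv φ x v, -(Dv ψ x v)) : V3 × V3) = -(Dv φ x v, Dv ψ x v) ∧
      Dv φ x v = 0) ∧
    -- (c) D is a totally geodesic foliation:
    (∀ W : V3 → V3, ContDiff ℝ 1 W →
      (∀ y, Dv φ y (W y) ⬝ᵥ crossProduct (φ y) (N1 y) +
            Dv ψ y (W y) ⬝ᵥ crossProduct (ψ y) (N2 y) = 0) →
      ∀ x v,
        Dv φ x v ⬝ᵥ crossProduct (φ x) (N1 x) +
          Dv ψ x v ⬝ᵥ crossProduct (ψ x) (N2 x) = 0 →
        Dv (fun y => Dv φ y (W y)) x v ⬝ᵥ crossProduct (φ x) (N1 x) +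
          Dv (fun y => Dv ψ y (W y)) x v ⬝ᵥ crossProduct (ψ x) (N2 x) = 0) := by
  -- N2 vanishes identically
  have hN2z : ∀ x, N2 x = 0 := by
    intro x
    have h1 := hNunit x; have h2 := hC1 x
    have : N2 x ⬝ᵥ N2 x = 0 := by linarith
    exact dotProduct_self_eq_zero.mp this
  have hdN2 : ∀ x, fderiv ℝ N2 x = 0 := by
    intro x
    rw [show N2 = fun _ => (0 : V3) from funext hN2z]
    exact fderiv_const_apply 0
  have hN1unit : ∀ x, N1 x ⬝ᵥ N1 x = 1 := by
    intro x
    have h1 := hNunit x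
    rw [hN2z x] at h1; simpa using h1
  -- `ψ`-component of `A` image vanishes
  have hψA : ∀ x v, Dv ψ x (A x v) = 0 := by
    intro x v
    have h := hW2 x v
    rw [hdN2 x, hN2z x] at h
    simp only [ContinuousLinearMap.zero_apply, zero_dotProduct, zero_smul, add_zero] at h
    exact (neg_eq_zero.mp h.symm)
  -- N1 is orthogonal to dφ
  have hN1φd : ∀ x v, N1 x ⬝ᵥ Dv φ x v = 0 := by
    intro x v
    have h := hNnorm x v
    rw [hN2z x] at h; simpa using h
  -- Weingarten for the first factor
  have hB : ∀ x v, fderiv ℝ N1 x v = -(Dv φ x (A x v)) := by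
    intro x v
    have h := hW1 x v
    rw [hN1φd x v] at h; simpa using h
  have hφdiff : Differentiable ℝ φ := hφ.differentiable (by norm_num)
  have hN1diff : Differentiable ℝ N1 := hN1.differentiable (by norm_num)
  -- φ is orthogonal to dφ
  have hφφd : ∀ x v, Dv φ x v ⬝ᵥ φ x = 0 := by
    intro x v
    have h := fderiv_dot (hφdiff x) (hφdiff x) v
    rw [show (fun y => φ y ⬝ᵥ φ y) = fun _ => (1 : ℝ) from funext hsph1,
      fderiv_const_apply] at h
    simp only [ContinuousLinearMap.zero_apply] at h
    have hc : φ x ⬝ᵥ fderiv ℝ φ x v = fderiv ℝ φ x v ⬝ᵥ φ x := dotProduct_comm _ _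
    show fderiv ℝ φ x v ⬝ᵥ φ x = 0
    rw [hc] at h; linarith
  -- second fundamental data: second derivative symmetry key identity
  have hf'diff : Differentiable ℝ (fderiv ℝ φ) :=
    (hφ.fderiv_right (m := 1) (by norm_num)).differentiable one_ne_zero
  have hkey : ∀ x v w, Dv φ x (A x v) ⬝ᵥ Dv φ x w = Dv φ x (A x w) ⬝ᵥ Dv φ x v := by
    intro x v w
    have hG : ∀ u : V3, HasFDerivAt (fun y => fderiv ℝ φ y u)
        ((ContinuousLinearMap.apply ℝ V3 u).comp (fderiv ℝ (fderiv ℝ φ) x)) x := by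
      intro u
      simpa [Function.comp_def] using
        (ContinuousLinearMap.apply ℝ V3 u).hasFDerivAt.comp x (hf'diff x).hasFDerivAt
    have main : ∀ z u : V3, N1 x ⬝ᵥ fderiv ℝ (fderiv ℝ φ) x z u
        = Dv φ x (A x z) ⬝ᵥ fderiv ℝ φ x u := by
      intro z u
      have hdot := fderiv_dot (f := N1) (g := fun y => fderiv ℝ φ y u)
        (hN1diff x) (hG u).differentiableAt z
      rw [show (fun y => N1 y ⬝ᵥ fderiv ℝ φ y u) = fun _ => (0 : ℝ) from
        funext fun y => hN1φd y u, fderiv_const_apply, (hG u).fderiv] at hdot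
      simp only [ContinuousLinearMap.zero_apply, ContinuousLinearMap.comp_apply,
        ContinuousLinearMap.apply_apply] at hdot
      rw [hB x z] at hdot
      have hneg : (-(Dv φ x (A x z))) ⬝ᵥ fderiv ℝ φ x u
          = -(Dv φ x (A x z) ⬝ᵥ fderiv ℝ φ x u) := neg_dotProduct _ _
      linarith [hdot, hneg]
    have hsymm : fderiv ℝ (fderiv ℝ φ) x v w = fderiv ℝ (fderiv ℝ φ) x w v :=
      second_derivative_symmetric (fun y => (hφdiff y).hasFDerivAt)
        (hf'diff x).hasFDerivAt v w
    have h1 := main v w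
    have h2 := main w v
    rw [hsymm] at h1
    show Dv φ x (A x v) ⬝ᵥ fderiv ℝ φ x w = Dv φ x (A x w) ⬝ᵥ fderiv ℝ φ x v
    rw [← h1, h2]
  -- membership in D kills dφ
  have hDzero : ∀ x v, Dv φ x v ⬝ᵥ crossProduct (φ x) (N1 x) +
      Dv ψ x v ⬝ᵥ crossProduct (ψ x) (N2 x) = 0 → Dv φ x v = 0 := by
    intro x v hv
    rw [hN2z x] at hv
    simp only [map_zero, dotProduct_zero, add_zero] at hv
    exact orth3 (hsph1 x) (hN1unit x) (dotProduct_comm (N1 x) (φ x) ▸ hNtan1 x)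
      (hφφd x v) (dotProduct_comm (N1 x) (Dv φ x v) ▸ hN1φd x v) hv
  refine ⟨?_, ?_, ?_⟩
  · intro x v
    rw [hψA x v]
    simp
  · intro x v hv
    have hφv : Dv φ x v = 0 := hDzero x v hv
    have hAv : Dv φ x (A x v) = 0 := by
      have h0 := hkey x v (A x v)
      rw [hφv, dotProduct_zero] at h0
      exact dotProduct_self_eq_zero.mp h0
    refine ⟨⟨hAv, hψA x v⟩, ?_, hφv⟩
    rw [Prod.neg_mk, Prod.mk.injEq]
    exact ⟨by rw [hφv]; simp, rfl⟩
  · intro W hW hWD x v hvD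
    have hzero : (fun y => Dv φ y (W y)) = fun _ => (0 : V3) :=
      funext fun y => hDzero y (W y) (hWD y)
    have h1 : Dv (fun y => Dv φ y (W y)) x v = 0 := by
      show fderiv ℝ (fun y => Dv φ y (W y)) x v = 0
      rw [hzero, fderiv_const_apply]
      simp
    rw [h1, hN2z x]
    simp
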